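/- In the CHSH Bell-test configuration with trial model the set of non-signaling distributions with fixed input distribution P(XY) (all P(x,y) > 0), for any ν with Ê = E_ν(I_CHSH) ∈ (2,4], the single-trial guessing probability P_guess(AB|XYE) = max{ Σ_e ω_e max_{ab} σ_e(ab|xy) } over convex decompositions ν = Σ_e ω_e σ_e into non-signaling distributions equals (6 − Ê)/4, independently of the input (x,y); hence H_min(AB|XYE) = −log₂((6 − Ê)/4). -/

import Mathlib

set_option maxHeartbeats 1000000


namespace CHSH18

/-- The set of non-signaling distributions of `(A,B,X,Y)` with fixed input
distribution `PXY`. -/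
def NS (PXY : Fin 2 × Fin 2 → ℝ) : Set (Fin 2 × Fin 2 × Fin 2 × Fin 2 → ℝ) :=
  {ν | (∀ d, 0 ≤ ν d) ∧
    (∀ x y : Fin 2, ∑ a : Fin 2, ∑ b : Fin 2, ν (a, b, x, y) = PXY (x, y)) ∧
    (∀ a x y y' : Fin 2, ∑ b : Fin 2, ν (a, b, x, y) / PXY (x, y) =
      ∑ b : Fin 2, ν (a, b, x, y') / PXY (x, y')) ∧
    (∀ b x x' y : Fin 2, ∑ a : Fin 2, ν (a, b, x, y) / PXY (x, y) =
      ∑ a : Fin 2, ν (a, b, x', y) / PXY (x', y))}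

/-- The CHSH Bell function `I_CHSH(a,b,x,y) = (1−2xy)(−1)^{a+b}/P(x,y)`. -/
noncomputable def chsh (PXY : Fin 2 × Fin 2 → ℝ)
    (d : Fin 2 × Fin 2 × Fin 2 × Fin 2) : ℝ :=
  (1 - 2 * ((d.2.2.1 : ℕ) : ℝ) * ((d.2.2.2 : ℕ) : ℝ)) *
    (-1 : ℝ) ^ ((d.1 : ℕ) + (d.2.1 : ℕ)) / PXY d.2.2

/-- PR box: `b = xy + a` in `𝔽₂`, with weight `P(x,y)/2`. -/
noncomputable def prBox (P : Fin 2 × Fin 2 → ℝ) (d : Fin 2 × Fin 2 × Fin 2 × Fin 2) : ℝ :=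
  if d.2.1 = d.2.2.1 * d.2.2.2 + d.1 then P d.2.2 / 2 else 0

/-- deterministic box `a = α + βx`, `b = γ + δy`. -/
noncomputable def dBox (P : Fin 2 × Fin 2 → ℝ) (α β γ δ : Fin 2)
    (d : Fin 2 × Fin 2 × Fin 2 × Fin 2) : ℝ :=
  if d.1 = α + β * d.2.2.1 ∧ d.2.1 = γ + δ * d.2.2.2 then P d.2.2 else 0

lemma half_div_self {c : ℝ} (hc : c ≠ 0) : c / 2 / c = 1 / 2 := by
  field_simp

lemma fin2_swap : ∀ a b c : Fin 2, (b = c + a) ↔ (a = b + c) := by decide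

lemma prBox_mem (P : Fin 2 × Fin 2 → ℝ) (hP : ∀ p, 0 < P p) : prBox P ∈ NS P := by
  refine ⟨fun d => ?_, fun x y => ?_, fun a x y y' => ?_, fun b x x' y => ?_⟩
  · unfold prBox; split_ifs
    · exact div_nonneg (hP _).le (by norm_num)
    · exact le_rfl
  · simp [prBox, Finset.sum_ite_eq']; ring
  · rw [← Finset.sum_div, ← Finset.sum_div]
    simp only [prBox]
    rw [Finset.sum_ite_eq' Finset.univ (x*y + a) (fun _ => P (x,y)/2),
      Finset.sum_ite_eq' Finset.univ (x*y' + a) (fun _ => P (x,y')/2)]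
    simp [half_div_self (hP (x,y)).ne', half_div_self (hP (x,y')).ne']
  · have h00 := half_div_self (hP (0,0)).ne'
    have h01 := half_div_self (hP (0,1)).ne'
    have h10 := half_div_self (hP (1,0)).ne'
    have h11 := half_div_self (hP (1,1)).ne'
    have h0 := half_div_self (hP 0).ne'
    have h1 := half_div_self (hP 1).ne'
    fin_cases b <;> fin_cases x <;> fin_cases x' <;> fin_cases y <;>
      simp [prBox, Fin.sum_univ_two, h00, h01, h10, h11, h0, h1]
lemma dBox_row (P : Fin 2 × Fin 2 → ℝ) (α β γ δ a x y : Fin 2) :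
    ∑ b : Fin 2, dBox P α β γ δ (a,b,x,y) = if a = α + β * x then P (x,y) else 0 := by
  by_cases h : a = α + β * x <;> simp [dBox, ite_and, h, Finset.sum_ite_eq']

lemma dBox_col (P : Fin 2 × Fin 2 → ℝ) (α β γ δ b x y : Fin 2) :
    ∑ a : Fin 2, dBox P α β γ δ (a,b,x,y) = if b = γ + δ * y then P (x,y) else 0 := by
  by_cases h : b = γ + δ * y <;> simp [dBox, ite_and, h, Finset.sum_ite_eq']

lemma dBox_mem (P : Fin 2 × Fin 2 → ℝ) (hP : ∀ p, 0 < P p) (α β γ δ : Fin 2) :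
    dBox P α β γ δ ∈ NS P := by
  refine ⟨fun d => ?_, fun x y => ?_, fun a x y y' => ?_, fun b x x' y => ?_⟩
  · unfold dBox; split_ifs
    · exact (hP _).le
    · exact le_rfl
  · rw [Finset.sum_congr rfl (fun a _ => dBox_row P α β γ δ a x y)]
    simp [Finset.sum_ite_eq']
  · rw [← Finset.sum_div, ← Finset.sum_div, dBox_row, dBox_row]
    by_cases h : a = α + β * x <;>
      simp [h, div_self (hP (x,y)).ne', div_self (hP (x,y')).ne']
  · rw [← Finset.sum_div, ← Finset.sum_div, dBox_col, dBox_col]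
    by_cases h : b = γ + δ * y <;>
      simp [h, div_self (hP (x,y)).ne', div_self (hP (x',y)).ne']
lemma prBox_sup (P : Fin 2 × Fin 2 → ℝ) (hP : ∀ p, 0 < P p) (x y : Fin 2) :
    ⨆ ab : Fin 2 × Fin 2, prBox P (ab.1, ab.2, x, y) / P (x, y) = 1/2 := by
  apply le_antisymm
  · apply ciSup_le
    intro ab
    unfold prBox
    dsimp only
    split_ifs
    · rw [half_div_self (hP (x,y)).ne']
    · rw [zero_div]; norm_num
  · have h := le_ciSup (f := fun ab : Fin 2 × Fin 2 => prBox P (ab.1, ab.2, x, y) / P (x, y))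
      (Set.Finite.bddAbove (Set.finite_range _)) ((0 : Fin 2), x*y)
    have hv : prBox P ((0:Fin 2), x*y, x, y) = P (x,y) / 2 := by
      simp [prBox]
    rw [hv, half_div_self (hP (x,y)).ne'] at h
    exact h

lemma dBox_sup (P : Fin 2 × Fin 2 → ℝ) (hP : ∀ p, 0 < P p) (α β γ δ x y : Fin 2) :
    ⨆ ab : Fin 2 × Fin 2, dBox P α β γ δ (ab.1, ab.2, x, y) / P (x, y) = 1 := by
  apply le_antisymm
  · apply ciSup_le
    intro ab
    unfold dBox
    dsimp only
    split_ifs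
    · rw [div_self (hP (x,y)).ne']
    · rw [zero_div]; norm_num
  · have h := le_ciSup (f := fun ab : Fin 2 × Fin 2 => dBox P α β γ δ (ab.1, ab.2, x, y) / P (x, y))
      (Set.Finite.bddAbove (Set.finite_range _)) (α + β * x, γ + δ * y)
    have hv : dBox P α β γ δ (α + β * x, γ + δ * y, x, y) = P (x,y) := by
      simp [dBox]
    rw [hv, div_self (hP (x,y)).ne'] at h
    exact h

lemma q_ineq (q : Fin 2 → Fin 2 → Fin 2 → Fin 2 → ℝ)
    (h0 : ∀ a b x y, 0 ≤ q a b x y)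
    (hn : ∀ x y, q 0 0 x y + q 0 1 x y + q 1 0 x y + q 1 1 x y = 1)
    (hA : ∀ a x, q a 0 x 0 + q a 1 x 0 = q a 0 x 1 + q a 1 x 1)
    (hB : ∀ b y, q 0 b 0 y + q 1 b 0 y = q 0 b 1 y + q 1 b 1 y)
    (E : ℝ)
    (hE : E = (q 0 0 0 0 - q 0 1 0 0 - q 1 0 0 0 + q 1 1 0 0)
            + (q 0 0 0 1 - q 0 1 0 1 - q 1 0 0 1 + q 1 1 0 1)
            + (q 0 0 1 0 - q 0 1 1 0 - q 1 0 1 0 + q 1 1 1 0)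
            - (q 0 0 1 1 - q 0 1 1 1 - q 1 0 1 1 + q 1 1 1 1)) :
    (∀ a b x y, 4 * q a b x y + E ≤ 6) ∧ -4 ≤ E ∧ E ≤ 6 := by
  constructor
  · intro a b x y
    fin_cases a <;> fin_cases b <;> fin_cases x <;> fin_cases y <;>
      simp only [Fin.isValue, Fin.mk_zero, Fin.mk_one] <;>
      linarith [h0 0 0 0 0, h0 0 0 0 1, h0 0 0 1 0, h0 0 0 1 1,
        h0 0 1 0 0, h0 0 1 0 1, h0 0 1 1 0, h0 0 1 1 1,
        h0 1 0 0 0, h0 1 0 0 1, h0 1 0 1 0, h0 1 0 1 1,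
        h0 1 1 0 0, h0 1 1 0 1, h0 1 1 1 0, h0 1 1 1 1,
        hn 0 0, hn 0 1, hn 1 0, hn 1 1,
        hA 0 0, hA 0 1, hA 1 0, hA 1 1,
        hB 0 0, hB 0 1, hB 1 0, hB 1 1]
  constructor <;>
    linarith [h0 0 0 0 0, h0 0 0 0 1, h0 0 0 1 0, h0 0 0 1 1,
      h0 0 1 0 0, h0 0 1 0 1, h0 0 1 1 0, h0 0 1 1 1,
      h0 1 0 0 0, h0 1 0 0 1, h0 1 0 1 0, h0 1 0 1 1,
      h0 1 1 0 0, h0 1 1 0 1, h0 1 1 1 0, h0 1 1 1 1,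
      hn 0 0, hn 0 1, hn 1 0, hn 1 1,
      hA 0 0, hA 0 1, hA 1 0, hA 1 1,
      hB 0 0, hB 0 1, hB 1 0, hB 1 1]

lemma E_expand (P : Fin 2 × Fin 2 → ℝ) (σ : Fin 2 × Fin 2 × Fin 2 × Fin 2 → ℝ) :
    ∑ d, σ d * chsh P d =
      (σ (0,0,0,0) - σ (0,1,0,0) - σ (1,0,0,0) + σ (1,1,0,0)) / P (0,0)
    + (σ (0,0,0,1) - σ (0,1,0,1) - σ (1,0,0,1) + σ (1,1,0,1)) / P (0,1)
    + (σ (0,0,1,0) - σ (0,1,1,0) - σ (1,0,1,0) + σ (1,1,1,0)) / P (1,0)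
    - (σ (0,0,1,1) - σ (0,1,1,1) - σ (1,0,1,1) + σ (1,1,1,1)) / P (1,1) := by
  simp [Fintype.sum_prod_type, Fin.sum_univ_two, chsh]
  ring

lemma ns_q (P : Fin 2 × Fin 2 → ℝ) (hP : ∀ p, 0 < P p)
    (σ : Fin 2 × Fin 2 × Fin 2 × Fin 2 → ℝ) (hσ : σ ∈ NS P) :
    (∀ a b x y : Fin 2, 0 ≤ σ (a,b,x,y) / P (x,y)) ∧
    (∀ x y : Fin 2, σ (0,0,x,y)/P (x,y) + σ (0,1,x,y)/P (x,y)
        + σ (1,0,x,y)/P (x,y) + σ (1,1,x,y)/P (x,y) = 1) ∧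
    (∀ a x : Fin 2, σ (a,0,x,0)/P (x,0) + σ (a,1,x,0)/P (x,0)
        = σ (a,0,x,1)/P (x,1) + σ (a,1,x,1)/P (x,1)) ∧
    (∀ b y : Fin 2, σ (0,b,0,y)/P (0,y) + σ (1,b,0,y)/P (0,y)
        = σ (0,b,1,y)/P (1,y) + σ (1,b,1,y)/P (1,y)) := by
  obtain ⟨h0, h1, hA, hB⟩ := hσ
  refine ⟨fun a b x y => div_nonneg (h0 _) (hP _).le, fun x y => ?_,
    fun a x => by simpa [Fin.sum_univ_two] using hA a x 0 1,
    fun b y => by simpa [Fin.sum_univ_two] using hB b 0 1 y⟩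
  have h := h1 x y
  simp [Fin.sum_univ_two] at h
  have hne : P (x,y) ≠ 0 := (hP _).ne'
  field_simp
  linarith

lemma box_bounds (P : Fin 2 × Fin 2 → ℝ) (hP : ∀ p, 0 < P p)
    (σ : Fin 2 × Fin 2 × Fin 2 × Fin 2 → ℝ) (hσ : σ ∈ NS P) :
    (∀ a b x y : Fin 2, 4 * (σ (a,b,x,y) / P (x,y)) + (∑ d, σ d * chsh P d) ≤ 6) ∧
    -4 ≤ (∑ d, σ d * chsh P d) ∧ (∑ d, σ d * chsh P d) ≤ 6 := by
  obtain ⟨hq0, hn, hA, hB⟩ := ns_q P hP σ hσ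
  have hEq : (∑ d, σ d * chsh P d) =
      (σ (0,0,0,0)/P (0,0) - σ (0,1,0,0)/P (0,0) - σ (1,0,0,0)/P (0,0) + σ (1,1,0,0)/P (0,0))
    + (σ (0,0,0,1)/P (0,1) - σ (0,1,0,1)/P (0,1) - σ (1,0,0,1)/P (0,1) + σ (1,1,0,1)/P (0,1))
    + (σ (0,0,1,0)/P (1,0) - σ (0,1,1,0)/P (1,0) - σ (1,0,1,0)/P (1,0) + σ (1,1,1,0)/P (1,0))
    - (σ (0,0,1,1)/P (1,1) - σ (0,1,1,1)/P (1,1) - σ (1,0,1,1)/P (1,1) + σ (1,1,1,1)/P (1,1)) := by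
    rw [E_expand]; ring
  exact q_ineq (fun a b x y => σ (a,b,x,y) / P (x,y)) hq0 hn hA hB _ hEq

lemma ns_le (P : Fin 2 × Fin 2 → ℝ) (hP : ∀ p, 0 < P p)
    (σ : Fin 2 × Fin 2 × Fin 2 × Fin 2 → ℝ) (hσ : σ ∈ NS P) :
    ∀ d, σ d ≤ P d.2.2 := by
  obtain ⟨h0, h1, -, -⟩ := hσ
  rintro ⟨a, b, x, y⟩
  have h := h1 x y
  simp only [Fin.sum_univ_two] at h
  show σ (a, b, x, y) ≤ P (x, y)
  fin_cases a <;> fin_cases b <;> simp only [Fin.isValue, Fin.mk_zero, Fin.mk_one] <;>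
    linarith [h0 (0,0,x,y), h0 (0,1,x,y), h0 (1,0,x,y), h0 (1,1,x,y)]


lemma recon (P : Fin 2 × Fin 2 → ℝ) (hP : ∀ p, 0 < P p)
    (ν : Fin 2 × Fin 2 × Fin 2 × Fin 2 → ℝ) (hν : ν ∈ NS P)
    (Ehat : ℝ) (hE : Ehat = ∑ d, ν d * chsh P d) (hE2 : 2 ≤ Ehat) :
    ∃ m0 m1 m2 m3 m4 m5 m6 m7 m8 : ℝ,
      0 ≤ m0 ∧ 0 ≤ m1 ∧ 0 ≤ m2 ∧ 0 ≤ m3 ∧ 0 ≤ m4 ∧ 0 ≤ m5 ∧ 0 ≤ m6 ∧ 0 ≤ m7 ∧ 0 ≤ m8 ∧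
      m0 = (Ehat - 2)/2 ∧
      m0 + m1 + m2 + m3 + m4 + m5 + m6 + m7 + m8 = 1 ∧
      ∀ d, m0 * prBox P d + m1 * dBox P 0 0 0 0 d + m2 * dBox P 0 0 0 1 d +
        m3 * dBox P 0 1 0 0 d + m4 * dBox P 0 1 1 1 d + m5 * dBox P 1 1 0 1 d +
        m6 * dBox P 1 1 1 0 d + m7 * dBox P 1 0 1 1 d + m8 * dBox P 1 0 1 0 d = ν d := by
  obtain ⟨hq0, hn, hA, hB⟩ := ns_q P hP ν hν
  have hEq : Ehat =
      (ν (0,0,0,0)/P (0,0) - ν (0,1,0,0)/P (0,0) - ν (1,0,0,0)/P (0,0) + ν (1,1,0,0)/P (0,0))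
    + (ν (0,0,0,1)/P (0,1) - ν (0,1,0,1)/P (0,1) - ν (1,0,0,1)/P (0,1) + ν (1,1,0,1)/P (0,1))
    + (ν (0,0,1,0)/P (1,0) - ν (0,1,1,0)/P (1,0) - ν (1,0,1,0)/P (1,0) + ν (1,1,1,0)/P (1,0))
    - (ν (0,0,1,1)/P (1,1) - ν (0,1,1,1)/P (1,1) - ν (1,0,1,1)/P (1,1) + ν (1,1,1,1)/P (1,1)) := by
    rw [hE, E_expand]; ring

  refine ⟨((Ehat - 2)/2), (ν (0,0,1,1) / P (1,1)), (ν (0,0,0,0) / P (0,0) - ν (0,0,0,1) / P (0,1) + ν (0,1,0,0) / P (0,0)), (ν (0,0,0,0) / P (0,0) - ν (0,0,1,0) / P (1,0) + ν (1,0,0,0) / P (0,0)), (ν (0,1,0,0) / P (0,0)), (ν (1,0,0,0) / P (0,0)), (ν (0,1,1,0) / P (1,0)), (ν (1,0,0,1) / P (0,1)), (ν (0,0,0,0) / P (0,0) - ν (0,0,0,1) / P (0,1) - ν (0,0,1,0) / P (1,0) + ν (0,0,1,1) / P (1,1) + ν (0,1,0,0) / P (0,0) - ν (0,1,1,0) /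 P (1,0) + ν (1,0,0,0) / P (0,0) - ν (1,0,0,1) / P (0,1) + ν (1,1,0,0) / P (0,0)),
    ?_, ?_, ?_, ?_, ?_, ?_, ?_, ?_, ?_, rfl, ?_, ?_⟩
  · linarith [hq0 0 0 0 0, hq0 0 0 0 1, hq0 0 0 1 0, hq0 0 0 1 1, hq0 0 1 0 0, hq0 0 1 0 1, hq0 0 1 1 0, hq0 0 1 1 1, hq0 1 0 0 0, hq0 1 0 0 1, hq0 1 0 1 0, hq0 1 0 1 1, hq0 1 1 0 0, hq0 1 1 0 1, hq0 1 1 1 0, hq0 1 1 1 1, hn 0 0, hn 0 1, hn 1 0, hn 1 1, hA 0 0, hA 0 1, hA 1 0, hA 1 1, hB 0 0, hB 0 1, hB 1 0, hB 1 1, hEq, hE2]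
  · linarith [hq0 0 0 0 0, hq0 0 0 0 1, hq0 0 0 1 0, hq0 0 0 1 1, hq0 0 1 0 0, hq0 0 1 0 1, hq0 0 1 1 0, hq0 0 1 1 1, hq0 1 0 0 0, hq0 1 0 0 1, hq0 1 0 1 0, hq0 1 0 1 1, hq0 1 1 0 0, hq0 1 1 0 1, hq0 1 1 1 0, hq0 1 1 1 1, hn 0 0, hn 0 1, hn 1 0, hn 1 1, hA 0 0, hA 0 1, hA 1 0, hA 1 1, hB 0 0, hB 0 1, hB 1 0, hB 1 1, hEq, hE2]
  · linarith [hq0 0 0 0 0, hq0 0 0 0 1, hq0 0 0 1 0, hq0 0 0 1 1, hq0 0 1 0 0, hq0 0 1 0 1, hq0 0 1 1 0, hq0 0 1 1 1, hq0 1 0 0 0, hq0 1 0 0 1, hq0 1 0 1 0, hq0 1 0 1 1, hq0 1 1 0 0, hq0 1 1 0 1, hq0 1 1 1 0, hq0 1 1 1 1, hn 0 0, hn 0 1, hn 1 0, hn 1 1, hA 0 0, hA 0 1, hA 1 0, hA 1 1, hB 0 0, hB 0 1, hB 1 0, hB 1 1, hEq, hE2]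
  · linarith [hq0 0 0 0 0, hq0 0 0 0 1, hq0 0 0 1 0, hq0 0 0 1 1, hq0 0 1 0 0, hq0 0 1 0 1, hq0 0 1 1 0, hq0 0 1 1 1, hq0 1 0 0 0, hq0 1 0 0 1, hq0 1 0 1 0, hq0 1 0 1 1, hq0 1 1 0 0, hq0 1 1 0 1, hq0 1 1 1 0, hq0 1 1 1 1, hn 0 0, hn 0 1, hn 1 0, hn 1 1, hA 0 0, hA 0 1, hA 1 0, hA 1 1, hB 0 0, hB 0 1, hB 1 0, hB 1 1, hEq, hE2]
  · linarith [hq0 0 0 0 0, hq0 0 0 0 1, hq0 0 0 1 0, hq0 0 0 1 1, hq0 0 1 0 0, hq0 0 1 0 1, hq0 0 1 1 0, hq0 0 1 1 1, hq0 1 0 0 0, hq0 1 0 0 1, hq0 1 0 1 0, hq0 1 0 1 1, hq0 1 1 0 0, hq0 1 1 0 1, hq0 1 1 1 0, hq0 1 1 1 1, hn 0 0, hn 0 1, hn 1 0, hn 1 1, hA 0 0, hA 0 1, hA 1 0, hA 1 1, hB 0 0, hB 0 1, hB 1 0, hB 1 1, hEq, hE2]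
  · linarith [hq0 0 0 0 0, hq0 0 0 0 1, hq0 0 0 1 0, hq0 0 0 1 1, hq0 0 1 0 0, hq0 0 1 0 1, hq0 0 1 1 0, hq0 0 1 1 1, hq0 1 0 0 0, hq0 1 0 0 1, hq0 1 0 1 0, hq0 1 0 1 1, hq0 1 1 0 0, hq0 1 1 0 1, hq0 1 1 1 0, hq0 1 1 1 1, hn 0 0, hn 0 1, hn 1 0, hn 1 1, hA 0 0, hA 0 1, hA 1 0, hA 1 1, hB 0 0, hB 0 1, hB 1 0, hB 1 1, hEq, hE2]
  · linarith [hq0 0 0 0 0, hq0 0 0 0 1, hq0 0 0 1 0, hq0 0 0 1 1, hq0 0 1 0 0, hq0 0 1 0 1, hq0 0 1 1 0, hq0 0 1 1 1, hq0 1 0 0 0, hq0 1 0 0 1, hq0 1 0 1 0, hq0 1 0 1 1, hq0 1 1 0 0, hq0 1 1 0 1, hq0 1 1 1 0, hq0 1 1 1 1, hn 0 0, hn 0 1, hn 1 0, hn 1 1, hA 0 0, hA 0 1, hA 1 0, hA 1 1, hB 0 0, hB 0 1, hB 1 0, hB 1 1, hEq, hE2]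
  · linarith [hq0 0 0 0 0, hq0 0 0 0 1, hq0 0 0 1 0, hq0 0 0 1 1, hq0 0 1 0 0, hq0 0 1 0 1, hq0 0 1 1 0, hq0 0 1 1 1, hq0 1 0 0 0, hq0 1 0 0 1, hq0 1 0 1 0, hq0 1 0 1 1, hq0 1 1 0 0, hq0 1 1 0 1, hq0 1 1 1 0, hq0 1 1 1 1, hn 0 0, hn 0 1, hn 1 0, hn 1 1, hA 0 0, hA 0 1, hA 1 0, hA 1 1, hB 0 0, hB 0 1, hB 1 0, hB 1 1, hEq, hE2]
  · linarith [hq0 0 0 0 0, hq0 0 0 0 1, hq0 0 0 1 0, hq0 0 0 1 1, hq0 0 1 0 0, hq0 0 1 0 1, hq0 0 1 1 0, hq0 0 1 1 1, hq0 1 0 0 0, hq0 1 0 0 1, hq0 1 0 1 0, hq0 1 0 1 1, hq0 1 1 0 0, hq0 1 1 0 1, hq0 1 1 1 0, hq0 1 1 1 1, hn 0 0, hn 0 1, hn 1 0, hn 1 1, hA 0 0, hA 0 1, hA 1 0, hA 1 1, hB 0 0, hB 0 1, hB 1 0, hB 1 1, hEq, hE2]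
  · linarith [hq0 0 0 0 0, hq0 0 0 0 1, hq0 0 0 1 0, hq0 0 0 1 1, hq0 0 1 0 0, hq0 0 1 0 1, hq0 0 1 1 0, hq0 0 1 1 1, hq0 1 0 0 0, hq0 1 0 0 1, hq0 1 0 1 0, hq0 1 0 1 1, hq0 1 1 0 0, hq0 1 1 0 1, hq0 1 1 1 0, hq0 1 1 1 1, hn 0 0, hn 0 1, hn 1 0, hn 1 1, hA 0 0, hA 0 1, hA 1 0, hA 1 1, hB 0 0, hB 0 1, hB 1 0, hB 1 1, hEq, hE2]
  rintro ⟨a, b, x, y⟩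
  fin_cases a <;> fin_cases b <;> fin_cases x <;> fin_cases y <;>
    simp only [Fin.isValue, Fin.mk_zero, Fin.mk_one]
  · have hc : ν (0,0,0,0) / P (0,0) = ((Ehat - 2)/2) * (1/2 : ℝ) + (ν (0,0,1,1) / P (1,1)) + (ν (0,0,0,0) / P (0,0) - ν (0,0,0,1) / P (0,1) + ν (0,1,0,0) / P (0,0)) + (ν (0,0,0,0) / P (0,0) - ν (0,0,1,0) / P (1,0) + ν (1,0,0,0) / P (0,0)) := by
      linarith [hq0 0 0 0 0, hq0 0 0 0 1, hq0 0 0 1 0, hq0 0 0 1 1, hq0 0 1 0 0, hq0 0 1 0 1, hq0 0 1 1 0, hq0 0 1 1 1, hq0 1 0 0 0, hq0 1 0 0 1, hq0 1 0 1 0, hq0 1 0 1 1, hq0 1 1 0 0, hq0 1 1 0 1, hq0 1 1 1 0, hq0 1 1 1 1, hn 0 0, hn 0 1, hn 1 0, hn 1 1, hA 0 0, hA 0 1, hA 1 0, hA 1 1, hB 0 0, hB 0 1, hB 1 0, hB 1 1, hEq, hE2]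
    conv_rhs => rw [← div_mul_cancel₀ (ν (0,0,0,0)) (hP (0,0)).ne']
    simp (config := { decide := true }) only [prBox, dBox, if_true, if_false]
    linear_combination (-P (0,0)) * hc
  · have hc : ν (0,0,0,1) / P (0,1) = ((Ehat - 2)/2) * (1/2 : ℝ) + (ν (0,0,1,1) / P (1,1)) + (ν (0,0,0,0) / P (0,0) - ν (0,0,1,0) / P (1,0) + ν (1,0,0,0) / P (0,0)) + (ν (0,1,0,0) / P (0,0)) := by
      linarith [hq0 0 0 0 0, hq0 0 0 0 1, hq0 0 0 1 0, hq0 0 0 1 1, hq0 0 1 0 0, hq0 0 1 0 1, hq0 0 1 1 0, hq0 0 1 1 1, hq0 1 0 0 0, hq0 1 0 0 1, hq0 1 0 1 0, hq0 1 0 1 1, hq0 1 1 0 0, hq0 1 1 0 1, hq0 1 1 1 0, hq0 1 1 1 1, hn 0 0, hn 0 1, hn 1 0, hn 1 1, hA 0 0, hA 0 1, hA 1 0, hA 1 1, hB 0 0, hB 0 1, hB 1 0, hB 1 1, hEq, hE2]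
    conv_rhs => rw [← div_mul_cancel₀ (ν (0,0,0,1)) (hP (0,1)).ne']
    simp (config := { decide := true }) only [prBox, dBox, if_true, if_false]
    linear_combination (-P (0,1)) * hc
  · have hc : ν (0,0,1,0) / P (1,0) = ((Ehat - 2)/2) * (1/2 : ℝ) + (ν (0,0,1,1) / P (1,1)) + (ν (0,0,0,0) / P (0,0) - ν (0,0,0,1) / P (0,1) + ν (0,1,0,0) / P (0,0)) + (ν (1,0,0,0) / P (0,0)) := by
      linarith [hq0 0 0 0 0, hq0 0 0 0 1, hq0 0 0 1 0, hq0 0 0 1 1, hq0 0 1 0 0, hq0 0 1 0 1, hq0 0 1 1 0, hq0 0 1 1 1, hq0 1 0 0 0, hq0 1 0 0 1, hq0 1 0 1 0, hq0 1 0 1 1, hq0 1 1 0 0, hq0 1 1 0 1, hq0 1 1 1 0, hq0 1 1 1 1, hn 0 0, hn 0 1, hn 1 0, hn 1 1, hA 0 0, hA 0 1, hA 1 0, hA 1 1, hB 0 0, hB 0 1, hB 1 0, hB 1 1, hEq, hE2]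
    conv_rhs => rw [← div_mul_cancel₀ (ν (0,0,1,0)) (hP (1,0)).ne']
    simp (config := { decide := true }) only [prBox, dBox, if_true, if_false]
    linear_combination (-P (1,0)) * hc
  · have hc : ν (0,0,1,1) / P (1,1) = (ν (0,0,1,1) / P (1,1)) := by
      linarith [hq0 0 0 0 0, hq0 0 0 0 1, hq0 0 0 1 0, hq0 0 0 1 1, hq0 0 1 0 0, hq0 0 1 0 1, hq0 0 1 1 0, hq0 0 1 1 1, hq0 1 0 0 0, hq0 1 0 0 1, hq0 1 0 1 0, hq0 1 0 1 1, hq0 1 1 0 0, hq0 1 1 0 1, hq0 1 1 1 0, hq0 1 1 1 1, hn 0 0, hn 0 1, hn 1 0, hn 1 1, hA 0 0, hA 0 1, hA 1 0, hA 1 1, hB 0 0, hB 0 1, hB 1 0, hB 1 1, hEq, hE2]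
    conv_rhs => rw [← div_mul_cancel₀ (ν (0,0,1,1)) (hP (1,1)).ne']
    simp (config := { decide := true }) only [prBox, dBox, if_true, if_false]
    linear_combination (-P (1,1)) * hc
  · have hc : ν (0,1,0,0) / P (0,0) = (ν (0,1,0,0) / P (0,0)) := by
      linarith [hq0 0 0 0 0, hq0 0 0 0 1, hq0 0 0 1 0, hq0 0 0 1 1, hq0 0 1 0 0, hq0 0 1 0 1, hq0 0 1 1 0, hq0 0 1 1 1, hq0 1 0 0 0, hq0 1 0 0 1, hq0 1 0 1 0, hq0 1 0 1 1, hq0 1 1 0 0, hq0 1 1 0 1, hq0 1 1 1 0, hq0 1 1 1 1, hn 0 0, hn 0 1, hn 1 0, hn 1 1, hA 0 0, hA 0 1, hA 1 0, hA 1 1, hB 0 0, hB 0 1, hB 1 0, hB 1 1, hEq, hE2]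
    conv_rhs => rw [← div_mul_cancel₀ (ν (0,1,0,0)) (hP (0,0)).ne']
    simp (config := { decide := true }) only [prBox, dBox, if_true, if_false]
    linear_combination (-P (0,0)) * hc
  · have hc : ν (0,1,0,1) / P (0,1) = (ν (0,0,0,0) / P (0,0) - ν (0,0,0,1) / P (0,1) + ν (0,1,0,0) / P (0,0)) := by
      linarith [hq0 0 0 0 0, hq0 0 0 0 1, hq0 0 0 1 0, hq0 0 0 1 1, hq0 0 1 0 0, hq0 0 1 0 1, hq0 0 1 1 0, hq0 0 1 1 1, hq0 1 0 0 0, hq0 1 0 0 1, hq0 1 0 1 0, hq0 1 0 1 1, hq0 1 1 0 0, hq0 1 1 0 1, hq0 1 1 1 0, hq0 1 1 1 1, hn 0 0, hn 0 1, hn 1 0, hn 1 1, hA 0 0, hA 0 1, hA 1 0, hA 1 1, hB 0 0, hB 0 1, hB 1 0, hB 1 1, hEq, hE2]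
    conv_rhs => rw [← div_mul_cancel₀ (ν (0,1,0,1)) (hP (0,1)).ne']
    simp (config := { decide := true }) only [prBox, dBox, if_true, if_false]
    linear_combination (-P (0,1)) * hc
  · have hc : ν (0,1,1,0) / P (1,0) = (ν (0,1,1,0) / P (1,0)) := by
      linarith [hq0 0 0 0 0, hq0 0 0 0 1, hq0 0 0 1 0, hq0 0 0 1 1, hq0 0 1 0 0, hq0 0 1 0 1, hq0 0 1 1 0, hq0 0 1 1 1, hq0 1 0 0 0, hq0 1 0 0 1, hq0 1 0 1 0, hq0 1 0 1 1, hq0 1 1 0 0, hq0 1 1 0 1, hq0 1 1 1 0, hq0 1 1 1 1, hn 0 0, hn 0 1, hn 1 0, hn 1 1, hA 0 0, hA 0 1, hA 1 0, hA 1 1, hB 0 0, hB 0 1, hB 1 0, hB 1 1, hEq, hE2]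
    conv_rhs => rw [← div_mul_cancel₀ (ν (0,1,1,0)) (hP (1,0)).ne']
    simp (config := { decide := true }) only [prBox, dBox, if_true, if_false]
    linear_combination (-P (1,0)) * hc
  · have hc : ν (0,1,1,1) / P (1,1) = ((Ehat - 2)/2) * (1/2 : ℝ) + (ν (0,0,0,0) / P (0,0) - ν (0,0,0,1) / P (0,1) + ν (0,1,0,0) / P (0,0)) + (ν (1,0,0,0) / P (0,0)) + (ν (0,1,1,0) / P (1,0)) := by
      linarith [hq0 0 0 0 0, hq0 0 0 0 1, hq0 0 0 1 0, hq0 0 0 1 1, hq0 0 1 0 0, hq0 0 1 0 1, hq0 0 1 1 0, hq0 0 1 1 1, hq0 1 0 0 0, hq0 1 0 0 1, hq0 1 0 1 0, hq0 1 0 1 1, hq0 1 1 0 0, hq0 1 1 0 1, hq0 1 1 1 0, hq0 1 1 1 1, hn 0 0, hn 0 1, hn 1 0, hn 1 1, hA 0 0, hA 0 1, hA 1 0, hA 1 1, hB 0 0, hB 0 1, hB 1 0, hB 1 1, hEq, hE2]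
    conv_rhs => rw [← div_mul_cancel₀ (ν (0,1,1,1)) (hP (1,1)).ne']
    simp (config := { decide := true }) only [prBox, dBox, if_true, if_false]
    linear_combination (-P (1,1)) * hc
  · have hc : ν (1,0,0,0) / P (0,0) = (ν (1,0,0,0) / P (0,0)) := by
      linarith [hq0 0 0 0 0, hq0 0 0 0 1, hq0 0 0 1 0, hq0 0 0 1 1, hq0 0 1 0 0, hq0 0 1 0 1, hq0 0 1 1 0, hq0 0 1 1 1, hq0 1 0 0 0, hq0 1 0 0 1, hq0 1 0 1 0, hq0 1 0 1 1, hq0 1 1 0 0, hq0 1 1 0 1, hq0 1 1 1 0, hq0 1 1 1 1, hn 0 0, hn 0 1, hn 1 0, hn 1 1, hA 0 0, hA 0 1, hA 1 0, hA 1 1, hB 0 0, hB 0 1, hB 1 0, hB 1 1, hEq, hE2]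
    conv_rhs => rw [← div_mul_cancel₀ (ν (1,0,0,0)) (hP (0,0)).ne']
    simp (config := { decide := true }) only [prBox, dBox, if_true, if_false]
    linear_combination (-P (0,0)) * hc
  · have hc : ν (1,0,0,1) / P (0,1) = (ν (1,0,0,1) / P (0,1)) := by
      linarith [hq0 0 0 0 0, hq0 0 0 0 1, hq0 0 0 1 0, hq0 0 0 1 1, hq0 0 1 0 0, hq0 0 1 0 1, hq0 0 1 1 0, hq0 0 1 1 1, hq0 1 0 0 0, hq0 1 0 0 1, hq0 1 0 1 0, hq0 1 0 1 1, hq0 1 1 0 0, hq0 1 1 0 1, hq0 1 1 1 0, hq0 1 1 1 1, hn 0 0, hn 0 1, hn 1 0, hn 1 1, hA 0 0, hA 0 1, hA 1 0, hA 1 1, hB 0 0, hB 0 1, hB 1 0, hB 1 1, hEq, hE2]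
    conv_rhs => rw [← div_mul_cancel₀ (ν (1,0,0,1)) (hP (0,1)).ne']
    simp (config := { decide := true }) only [prBox, dBox, if_true, if_false]
    linear_combination (-P (0,1)) * hc
  · have hc : ν (1,0,1,0) / P (1,0) = (ν (0,0,0,0) / P (0,0) - ν (0,0,1,0) / P (1,0) + ν (1,0,0,0) / P (0,0)) := by
      linarith [hq0 0 0 0 0, hq0 0 0 0 1, hq0 0 0 1 0, hq0 0 0 1 1, hq0 0 1 0 0, hq0 0 1 0 1, hq0 0 1 1 0, hq0 0 1 1 1, hq0 1 0 0 0, hq0 1 0 0 1, hq0 1 0 1 0, hq0 1 0 1 1, hq0 1 1 0 0, hq0 1 1 0 1, hq0 1 1 1 0, hq0 1 1 1 1, hn 0 0, hn 0 1, hn 1 0, hn 1 1, hA 0 0, hA 0 1, hA 1 0, hA 1 1, hB 0 0, hB 0 1, hB 1 0, hB 1 1, hEq, hE2]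
    conv_rhs => rw [← div_mul_cancel₀ (ν (1,0,1,0)) (hP (1,0)).ne']
    simp (config := { decide := true }) only [prBox, dBox, if_true, if_false]
    linear_combination (-P (1,0)) * hc
  · have hc : ν (1,0,1,1) / P (1,1) = ((Ehat - 2)/2) * (1/2 : ℝ) + (ν (0,0,0,0) / P (0,0) - ν (0,0,1,0) / P (1,0) + ν (1,0,0,0) / P (0,0)) + (ν (0,1,0,0) / P (0,0)) + (ν (1,0,0,1) / P (0,1)) := by
      linarith [hq0 0 0 0 0, hq0 0 0 0 1, hq0 0 0 1 0, hq0 0 0 1 1, hq0 0 1 0 0, hq0 0 1 0 1, hq0 0 1 1 0, hq0 0 1 1 1, hq0 1 0 0 0, hq0 1 0 0 1, hq0 1 0 1 0, hq0 1 0 1 1, hq0 1 1 0 0, hq0 1 1 0 1, hq0 1 1 1 0, hq0 1 1 1 1, hn 0 0, hn 0 1, hn 1 0, hn 1 1, hA 0 0, hA 0 1, hA 1 0, hA 1 1, hB 0 0, hB 0 1, hB 1 0, hB 1 1, hEq, hE2]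
    conv_rhs => rw [← div_mul_cancel₀ (ν (1,0,1,1)) (hP (1,1)).ne']
    simp (config := { decide := true }) only [prBox, dBox, if_true, if_false]
    linear_combination (-P (1,1)) * hc
  · have hc : ν (1,1,0,0) / P (0,0) = ((Ehat - 2)/2) * (1/2 : ℝ) + (ν (0,1,1,0) / P (1,0)) + (ν (1,0,0,1) / P (0,1)) + (ν (0,0,0,0) / P (0,0) - ν (0,0,0,1) / P (0,1) - ν (0,0,1,0) / P (1,0) + ν (0,0,1,1) / P (1,1) + ν (0,1,0,0) / P (0,0) - ν (0,1,1,0) / P (1,0) + ν (1,0,0,0) / P (0,0) - ν (1,0,0,1) / P (0,1) + ν (1,1,0,0) / P (0,0)) := by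
      linarith [hq0 0 0 0 0, hq0 0 0 0 1, hq0 0 0 1 0, hq0 0 0 1 1, hq0 0 1 0 0, hq0 0 1 0 1, hq0 0 1 1 0, hq0 0 1 1 1, hq0 1 0 0 0, hq0 1 0 0 1, hq0 1 0 1 0, hq0 1 0 1 1, hq0 1 1 0 0, hq0 1 1 0 1, hq0 1 1 1 0, hq0 1 1 1 1, hn 0 0, hn 0 1, hn 1 0, hn 1 1, hA 0 0, hA 0 1, hA 1 0, hA 1 1, hB 0 0, hB 0 1, hB 1 0, hB 1 1, hEq, hE2]
    conv_rhs => rw [← div_mul_cancel₀ (ν (1,1,0,0)) (hP (0,0)).ne']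
    simp (config := { decide := true }) only [prBox, dBox, if_true, if_false]
    linear_combination (-P (0,0)) * hc
  · have hc : ν (1,1,0,1) / P (0,1) = ((Ehat - 2)/2) * (1/2 : ℝ) + (ν (1,0,0,0) / P (0,0)) + (ν (0,1,1,0) / P (1,0)) + (ν (0,0,0,0) / P (0,0) - ν (0,0,0,1) / P (0,1) - ν (0,0,1,0) / P (1,0) + ν (0,0,1,1) / P (1,1) + ν (0,1,0,0) / P (0,0) - ν (0,1,1,0) / P (1,0) + ν (1,0,0,0) / P (0,0) - ν (1,0,0,1) / P (0,1) + ν (1,1,0,0) / P (0,0)) := by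
      linarith [hq0 0 0 0 0, hq0 0 0 0 1, hq0 0 0 1 0, hq0 0 0 1 1, hq0 0 1 0 0, hq0 0 1 0 1, hq0 0 1 1 0, hq0 0 1 1 1, hq0 1 0 0 0, hq0 1 0 0 1, hq0 1 0 1 0, hq0 1 0 1 1, hq0 1 1 0 0, hq0 1 1 0 1, hq0 1 1 1 0, hq0 1 1 1 1, hn 0 0, hn 0 1, hn 1 0, hn 1 1, hA 0 0, hA 0 1, hA 1 0, hA 1 1, hB 0 0, hB 0 1, hB 1 0, hB 1 1, hEq, hE2]
    conv_rhs => rw [← div_mul_cancel₀ (ν (1,1,0,1)) (hP (0,1)).ne']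
    simp (config := { decide := true }) only [prBox, dBox, if_true, if_false]
    linear_combination (-P (0,1)) * hc
  · have hc : ν (1,1,1,0) / P (1,0) = ((Ehat - 2)/2) * (1/2 : ℝ) + (ν (0,1,0,0) / P (0,0)) + (ν (1,0,0,1) / P (0,1)) + (ν (0,0,0,0) / P (0,0) - ν (0,0,0,1) / P (0,1) - ν (0,0,1,0) / P (1,0) + ν (0,0,1,1) / P (1,1) + ν (0,1,0,0) / P (0,0) - ν (0,1,1,0) / P (1,0) + ν (1,0,0,0) / P (0,0) - ν (1,0,0,1) / P (0,1) + ν (1,1,0,0) / P (0,0)) := by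
      linarith [hq0 0 0 0 0, hq0 0 0 0 1, hq0 0 0 1 0, hq0 0 0 1 1, hq0 0 1 0 0, hq0 0 1 0 1, hq0 0 1 1 0, hq0 0 1 1 1, hq0 1 0 0 0, hq0 1 0 0 1, hq0 1 0 1 0, hq0 1 0 1 1, hq0 1 1 0 0, hq0 1 1 0 1, hq0 1 1 1 0, hq0 1 1 1 1, hn 0 0, hn 0 1, hn 1 0, hn 1 1, hA 0 0, hA 0 1, hA 1 0, hA 1 1, hB 0 0, hB 0 1, hB 1 0, hB 1 1, hEq, hE2]
    conv_rhs => rw [← div_mul_cancel₀ (ν (1,1,1,0)) (hP (1,0)).ne']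
    simp (config := { decide := true }) only [prBox, dBox, if_true, if_false]
    linear_combination (-P (1,0)) * hc
  · have hc : ν (1,1,1,1) / P (1,1) = (ν (0,0,0,0) / P (0,0) - ν (0,0,0,1) / P (0,1) - ν (0,0,1,0) / P (1,0) + ν (0,0,1,1) / P (1,1) + ν (0,1,0,0) / P (0,0) - ν (0,1,1,0) / P (1,0) + ν (1,0,0,0) / P (0,0) - ν (1,0,0,1) / P (0,1) + ν (1,1,0,0) / P (0,0)) := by
      linarith [hq0 0 0 0 0, hq0 0 0 0 1, hq0 0 0 1 0, hq0 0 0 1 1, hq0 0 1 0 0, hq0 0 1 0 1, hq0 0 1 1 0, hq0 0 1 1 1, hq0 1 0 0 0, hq0 1 0 0 1, hq0 1 0 1 0, hq0 1 0 1 1, hq0 1 1 0 0, hq0 1 1 0 1, hq0 1 1 1 0, hq0 1 1 1 1, hn 0 0, hn 0 1, hn 1 0, hn 1 1, hA 0 0, hA 0 1, hA 1 0, hA 1 1, hB 0 0, hB 0 1, hB 1 0, hB 1 1, hEq, hE2]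
    conv_rhs => rw [← div_mul_cancel₀ (ν (1,1,1,1)) (hP (1,1)).ne']
    simp (config := { decide := true }) only [prBox, dBox, if_true, if_false]
    linear_combination (-P (1,1)) * hc

/-- For any non-signaling distribution `ν` with CHSH expectation
`Ê ∈ (2,4]`, the single-trial guessing probability — the supremum over convex
decompositions `ν = Σ_e ω_e σ_e` into non-signaling distributions of
`Σ_e ω_e max_{ab} σ_e(ab|xy)` — equals `(6 − Ê)/4` for every input `(x,y)`;
hence `H_min(AB|XYE) = −log₂((6 − Ê)/4)`. -/
theorem guessing_probability_eq
    (PXY : Fin 2 × Fin 2 → ℝ) (hPXY : ∀ q, 0 < PXY q)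
    (hPXY1 : ∑ q : Fin 2 × Fin 2, PXY q = 1)
    (ν : Fin 2 × Fin 2 × Fin 2 × Fin 2 → ℝ) (hν : ν ∈ NS PXY)
    (Ehat : ℝ) (hE : Ehat = ∑ d, ν d * chsh PXY d)
    (hE2 : 2 < Ehat) (hE4 : Ehat ≤ 4) :
    ∀ x y : Fin 2,
      sSup {r : ℝ | ∃ (ω : ℕ → ℝ) (σe : ℕ → Fin 2 × Fin 2 × Fin 2 × Fin 2 → ℝ),
          (∀ e, 0 ≤ ω e) ∧ (∀ e, σe e ∈ NS PXY) ∧ (∑' e, ω e) = 1 ∧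
          (∀ d, ∑' e, ω e * σe e d = ν d) ∧
          r = ∑' e, ω e * ⨆ ab : Fin 2 × Fin 2, σe e (ab.1, ab.2, x, y) / PXY (x, y)}
        = (6 - Ehat) / 4 ∧
      -Real.logb 2
          (sSup {r : ℝ | ∃ (ω : ℕ → ℝ) (σe : ℕ → Fin 2 × Fin 2 × Fin 2 × Fin 2 → ℝ),
            (∀ e, 0 ≤ ω e) ∧ (∀ e, σe e ∈ NS PXY) ∧ (∑' e, ω e) = 1 ∧
            (∀ d, ∑' e, ω e * σe e d = ν d) ∧
            r = ∑' e, ω e * ⨆ ab : Fin 2 × Fin 2, σe e (ab.1, ab.2, x, y) / PXY (x, y)})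
        = -Real.logb 2 ((6 - Ehat) / 4) := by
  intro x y
  have hub : ∀ r ∈ {r : ℝ | ∃ (ω : ℕ → ℝ) (σe : ℕ → Fin 2 × Fin 2 × Fin 2 × Fin 2 → ℝ),
      (∀ e, 0 ≤ ω e) ∧ (∀ e, σe e ∈ NS PXY) ∧ (∑' e, ω e) = 1 ∧
      (∀ d, ∑' e, ω e * σe e d = ν d) ∧
      r = ∑' e, ω e * ⨆ ab : Fin 2 × Fin 2, σe e (ab.1, ab.2, x, y) / PXY (x, y)},
      r ≤ (6 - Ehat) / 4 := by
    rintro r ⟨ω, σe, hω0, hσNS, hω1, hrec, hr⟩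
    have hωs : Summable ω := by
      by_contra hns
      rw [tsum_eq_zero_of_not_summable hns] at hω1
      norm_num at hω1
    have hM_nonneg : ∀ e, 0 ≤ ⨆ ab : Fin 2 × Fin 2, σe e (ab.1, ab.2, x, y) / PXY (x, y) := by
      intro e
      have h := le_ciSup (f := fun ab : Fin 2 × Fin 2 => σe e (ab.1, ab.2, x, y) / PXY (x, y))
        (Set.Finite.bddAbove (Set.finite_range _)) ((0 : Fin 2), (0 : Fin 2))
      exact le_trans (div_nonneg ((hσNS e).1 _) (hPXY _).le) h
    have hM_le : ∀ e, (⨆ ab : Fin 2 × Fin 2, σe e (ab.1, ab.2, x, y) / PXY (x, y))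
        ≤ (6 - ∑ d, σe e d * chsh PXY d) / 4 := by
      intro e
      apply ciSup_le
      rintro ⟨a, b⟩
      have h := (box_bounds PXY hPXY (σe e) (hσNS e)).1 a b x y
      show σe e (a, b, x, y) / PXY (x, y) ≤ _
      linarith
    have hE_lb : ∀ e, -4 ≤ ∑ d, σe e d * chsh PXY d :=
      fun e => (box_bounds PXY hPXY (σe e) (hσNS e)).2.1
    have hE_ub : ∀ e, (∑ d, σe e d * chsh PXY d) ≤ 6 :=
      fun e => (box_bounds PXY hPXY (σe e) (hσNS e)).2.2
    have S1 : Summable (fun e => ω e * ((6 - ∑ d, σe e d * chsh PXY d) / 4)) := by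
      refine Summable.of_nonneg_of_le
        (fun e => mul_nonneg (hω0 e) (by linarith [hE_ub e]))
        (fun e => mul_le_mul_of_nonneg_left (by linarith [hE_lb e]) (hω0 e))
        (hωs.mul_right (10/4))
    have S2 : Summable (fun e => ω e * ⨆ ab : Fin 2 × Fin 2, σe e (ab.1, ab.2, x, y) / PXY (x, y)) :=
      Summable.of_nonneg_of_le (fun e => mul_nonneg (hω0 e) (hM_nonneg e))
        (fun e => mul_le_mul_of_nonneg_left (hM_le e) (hω0 e)) S1
    have SE : Summable (fun e => ω e * ∑ d, σe e d * chsh PXY d) := by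
      refine Summable.of_norm_bounded (hωs.mul_right 6) (fun e => ?_)
      rw [Real.norm_eq_abs, abs_mul, abs_of_nonneg (hω0 e)]
      exact mul_le_mul_of_nonneg_left (abs_le.mpr ⟨by linarith [hE_lb e], hE_ub e⟩) (hω0 e)
    have hEsum : ∑' e, ω e * ∑ d, σe e d * chsh PXY d = Ehat := by
      have hsd : ∀ d : Fin 2 × Fin 2 × Fin 2 × Fin 2,
          Summable (fun e => ω e * σe e d * chsh PXY d) := by
        intro d
        apply Summable.mul_right
        exact Summable.of_nonneg_of_le (fun e => mul_nonneg (hω0 e) ((hσNS e).1 d))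
          (fun e => mul_le_mul_of_nonneg_left (ns_le PXY hPXY (σe e) (hσNS e) d) (hω0 e))
          (hωs.mul_right (PXY d.2.2))
      calc ∑' e, ω e * ∑ d, σe e d * chsh PXY d
          = ∑' e, ∑ d, ω e * σe e d * chsh PXY d := by
            congr 1; funext e; rw [Finset.mul_sum]
            exact Finset.sum_congr rfl fun d _ => by ring
        _ = ∑ d, ∑' e, ω e * σe e d * chsh PXY d := Summable.tsum_finsetSum (fun d _ => hsd d)
        _ = ∑ d, ν d * chsh PXY d := by
            refine Finset.sum_congr rfl fun d _ => ?_
            rw [tsum_mul_right, hrec d]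
        _ = Ehat := hE.symm
    have hle := Summable.tsum_le_tsum (fun e => mul_le_mul_of_nonneg_left (hM_le e) (hω0 e)) S2 S1
    have hval : ∑' e, ω e * ((6 - ∑ d, σe e d * chsh PXY d) / 4) = (6 - Ehat) / 4 := by
      have heq : (fun e => ω e * ((6 - ∑ d, σe e d * chsh PXY d) / 4))
          = fun e => (6/4) * ω e - (1/4) * (ω e * ∑ d, σe e d * chsh PXY d) := by
        funext e; ring
      rw [heq, Summable.tsum_sub (hωs.mul_left (6/4)) (SE.mul_left (1/4)),
        tsum_mul_left, tsum_mul_left, hω1, hEsum]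
      ring
    rw [hr]
    calc ∑' e, ω e * ⨆ ab : Fin 2 × Fin 2, σe e (ab.1, ab.2, x, y) / PXY (x, y)
        ≤ ∑' e, ω e * ((6 - ∑ d, σe e d * chsh PXY d) / 4) := hle
      _ = (6 - Ehat) / 4 := hval
  have hmem : (6 - Ehat) / 4 ∈ {r : ℝ | ∃ (ω : ℕ → ℝ) (σe : ℕ → Fin 2 × Fin 2 × Fin 2 × Fin 2 → ℝ),
      (∀ e, 0 ≤ ω e) ∧ (∀ e, σe e ∈ NS PXY) ∧ (∑' e, ω e) = 1 ∧
      (∀ d, ∑' e, ω e * σe e d = ν d) ∧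
      (6 - Ehat) / 4 = ∑' e, ω e * ⨆ ab : Fin 2 × Fin 2, σe e (ab.1, ab.2, x, y) / PXY (x, y)} := by
    obtain ⟨m0, m1, m2, m3, m4, m5, m6, m7, m8, h0, h1, h2, h3, h4, h5, h6, h7, h8,
      hm0, hmsum, hmrec⟩ := recon PXY hPXY ν hν Ehat hE hE2.le
    refine ⟨fun e => if e = 0 then m0 else if e = 1 then m1 else if e = 2 then m2
        else if e = 3 then m3 else if e = 4 then m4 else if e = 5 then m5
        else if e = 6 then m6 else if e = 7 then m7 else if e = 8 then m8 else 0,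
      fun e => if e = 0 then prBox PXY else if e = 1 then dBox PXY 0 0 0 0
        else if e = 2 then dBox PXY 0 0 0 1 else if e = 3 then dBox PXY 0 1 0 0
        else if e = 4 then dBox PXY 0 1 1 1 else if e = 5 then dBox PXY 1 1 0 1
        else if e = 6 then dBox PXY 1 1 1 0 else if e = 7 then dBox PXY 1 0 1 1
        else if e = 8 then dBox PXY 1 0 1 0 else prBox PXY, ?_, ?_, ?_, ?_, ?_⟩
    · intro e
      dsimp only
      split_ifs
      exacts [h0, h1, h2, h3, h4, h5, h6, h7, h8, le_refl 0]
    · intro e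
      dsimp only
      split_ifs
      exacts [prBox_mem PXY hPXY, dBox_mem PXY hPXY 0 0 0 0, dBox_mem PXY hPXY 0 0 0 1,
        dBox_mem PXY hPXY 0 1 0 0, dBox_mem PXY hPXY 0 1 1 1, dBox_mem PXY hPXY 1 1 0 1,
        dBox_mem PXY hPXY 1 1 1 0, dBox_mem PXY hPXY 1 0 1 1, dBox_mem PXY hPXY 1 0 1 0,
        prBox_mem PXY hPXY]
    · rw [tsum_eq_sum (s := Finset.range 9) (f := fun e => if e = 0 then m0 else if e = 1 then m1
        else if e = 2 then m2 else if e = 3 then m3 else if e = 4 then m4 else if e = 5 then m5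
        else if e = 6 then m6 else if e = 7 then m7 else if e = 8 then m8 else 0)
        (fun b hb => by
          simp only [Finset.mem_range, not_lt] at hb
          beta_reduce
          rw [if_neg (by omega), if_neg (by omega), if_neg (by omega), if_neg (by omega),
            if_neg (by omega), if_neg (by omega), if_neg (by omega), if_neg (by omega),
            if_neg (by omega)])]
      norm_num [Finset.sum_range_succ]
      linarith [hmsum]
    · intro d
      rw [tsum_eq_sum (s := Finset.range 9)
        (fun b hb => by
          simp only [Finset.mem_range, not_lt] at hb
          beta_reduce
          rw [if_neg (by omega), if_neg (by omega), if_neg (by omega), if_neg (by omega),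
            if_neg (by omega), if_neg (by omega), if_neg (by omega), if_neg (by omega),
            if_neg (by omega), zero_mul])]
      norm_num [Finset.sum_range_succ]
      linarith [hmrec d]
    · rw [tsum_eq_sum (s := Finset.range 9)
        (fun b hb => by
          simp only [Finset.mem_range, not_lt] at hb
          beta_reduce
          rw [if_neg (by omega), if_neg (by omega), if_neg (by omega), if_neg (by omega),
            if_neg (by omega), if_neg (by omega), if_neg (by omega), if_neg (by omega),
            if_neg (by omega), zero_mul])]
      norm_num [Finset.sum_range_succ, prBox_sup PXY hPXY, dBox_sup PXY hPXY]
      linarith [hmsum, hm0]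
  have key : sSup {r : ℝ | ∃ (ω : ℕ → ℝ) (σe : ℕ → Fin 2 × Fin 2 × Fin 2 × Fin 2 → ℝ),
      (∀ e, 0 ≤ ω e) ∧ (∀ e, σe e ∈ NS PXY) ∧ (∑' e, ω e) = 1 ∧
      (∀ d, ∑' e, ω e * σe e d = ν d) ∧
      r = ∑' e, ω e * ⨆ ab : Fin 2 × Fin 2, σe e (ab.1, ab.2, x, y) / PXY (x, y)}
      = (6 - Ehat) / 4 :=
    le_antisymm (csSup_le ⟨_, hmem⟩ hub) (le_csSup ⟨(6 - Ehat) / 4, hub⟩ hmem)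
  exact ⟨key, by rw [key]⟩

end CHSH18
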